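/- arXiv:1205.3816 — 2 statements merged into one kernel-verified Lean document; each statement's English description precedes it below -/
import Mathlib

section
/- Let G be a factor-critical finite simple graph and G' a nice factor-critical subgraph of G, i.e., G' is factor-critical and G − V(G') has a perfect matching. Then the contraction G/G', the simple graph obtained from G by identifying all vertices of G' to a single vertex and deleting the resulting loops and parallel edges, is factor-critical. -/
open SimpleGraph

variable {V : Type*}

/-- A set of edges is pairwise vertex-disjoint. -/
def DisjointEdges (N : Set (Sym2 V)) : Prop :=
  ∀ e ∈ N, ∀ f ∈ N, e ≠ f → ∀ x : V, x ∈ e → x ∉ f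

/-- `M` is a matching of `G`: a set of pairwise vertex-disjoint edges of `G`. -/
def IsMatchingSet (G : SimpleGraph V) (M : Set (Sym2 V)) : Prop :=
  M ⊆ G.edgeSet ∧ DisjointEdges M

/-- `M` is a perfect matching of `G`: a matching covering every vertex. -/
def IsPerfectMatchingSet (G : SimpleGraph V) (M : Set (Sym2 V)) : Prop :=
  IsMatchingSet G M ∧ ∀ v : V, ∃ e ∈ M, v ∈ e

/-- `M` is a near-perfect matching of `G` whose unique exposed vertex is `v`. -/
def IsNearPerfectMatchingSet (G : SimpleGraph V) (M : Set (Sym2 V)) (v : V) : Prop :=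
  IsMatchingSet G M ∧ (∀ e ∈ M, v ∉ e) ∧ ∀ u : V, u ≠ v → ∃ e ∈ M, u ∈ e

/-- The induced subgraph `G[X]` has a perfect matching. -/
def HasPMOn (G : SimpleGraph V) (X : Set V) : Prop :=
  ∃ M : Set (Sym2 V), IsMatchingSet G M ∧ (∀ e ∈ M, ∀ x : V, x ∈ e → x ∈ X) ∧
    ∀ v ∈ X, ∃ e ∈ M, v ∈ e

/-- `G` is factorizable: it has a perfect matching. -/
def Factorizable (G : SimpleGraph V) : Prop :=
  ∃ M : Set (Sym2 V), IsPerfectMatchingSet G M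

/-- `G` is factor-critical: deleting any single vertex leaves a factorizable graph. -/
def FactorCritical (G : SimpleGraph V) : Prop :=
  ∀ v : V, HasPMOn G {v}ᶜ

/-- A walk is `M`-alternating: its edges outside `M` are pairwise vertex-disjoint. -/
def MAlternating (M : Set (Sym2 V)) {G : SimpleGraph V} {u v : V} (p : G.Walk u v) : Prop :=
  ∀ e ∈ p.edges, ∀ f ∈ p.edges, e ∉ M → f ∉ M → e ≠ f → ∀ x : V, x ∈ e → x ∉ f

/-- An `M`-saturated path: a path with an odd number of edges such that `M ∩ E(P)`
is a perfect matching of `P`. -/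
def IsSaturatedPath (M : Set (Sym2 V)) {G : SimpleGraph V} {u v : V} (p : G.Walk u v) : Prop :=
  p.IsPath ∧ Odd p.length ∧ ∀ x ∈ p.support, ∃ e ∈ p.edges, e ∈ M ∧ x ∈ e

/-- An `M`-exposed path: a path with an odd number of edges such that `E(P) \ M`
is a perfect matching of `P`. -/
def IsExposedPath (M : Set (Sym2 V)) {G : SimpleGraph V} {u v : V} (p : G.Walk u v) : Prop :=
  p.IsPath ∧ Odd p.length ∧ ∀ x ∈ p.support, ∃ e ∈ p.edges, e ∉ M ∧ x ∈ e

/-- An `M`-balanced path from `u` to `v`: an `M`-alternating path with an even number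
of edges whose first edge (the one incident with `u`) belongs to `M`; a trivial
one-vertex path is `M`-balanced. -/
def IsBalancedPath (M : Set (Sym2 V)) {G : SimpleGraph V} {u v : V} (p : G.Walk u v) : Prop :=
  p.IsPath ∧ Even p.length ∧ MAlternating M p ∧ ∀ e ∈ p.edges.head?, e ∈ M

/-- An edge of `G` is allowed if it lies in some perfect matching of `G`. -/
def Allowed (G : SimpleGraph V) (e : Sym2 V) : Prop :=
  ∃ M : Set (Sym2 V), IsPerfectMatchingSet G M ∧ e ∈ M

/-- The spanning subgraph of `G` formed by its allowed edges. -/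
def allowedSubgraph (G : SimpleGraph V) : SimpleGraph V where
  Adj u v := G.Adj u v ∧ Allowed G s(u, v)
  symm := by
    refine ⟨?_⟩
    intro u v h
    refine ⟨h.1.symm, ?_⟩
    rw [Sym2.eq_swap]
    exact h.2
  loopless := ⟨fun v h => G.irrefl h.1⟩

/-- `C` is (the vertex set of) a factor-component of `G`: a connected component of the
spanning subgraph of `G` formed by the allowed edges (the factor-component itself being
the induced subgraph `G[C]`). -/
def IsFactorComponent (G : SimpleGraph V) (C : Set V) : Prop :=
  ∃ c : (allowedSubgraph G).ConnectedComponent, C = c.supp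

/-- `G` is elementary: it is factorizable and has exactly one factor-component. -/
def Elementary (G : SimpleGraph V) : Prop :=
  Factorizable G ∧ (allowedSubgraph G).Connected

/-- `X` is a separating set of `G`. -/
def Separating (G : SimpleGraph V) (X : Set V) : Prop :=
  ∀ C : Set V, IsFactorComponent G C → C ⊆ X ∨ Disjoint C X

/-- The contraction `G[X]/S`: the induced subgraph of `G` on `X` with `S` contracted
to a single vertex (the vertex `none`), deleting loops and parallel edges. -/
def contractOn (G : SimpleGraph V) (X S : Set V) : SimpleGraph (Option ↥(X \ S)) where
  Adj a b :=
    match a, b with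
    | some x, some y => G.Adj x.1 y.1
    | some x, none => ∃ s ∈ S, G.Adj x.1 s
    | none, some y => ∃ s ∈ S, G.Adj y.1 s
    | none, none => False
  symm := by
    refine ⟨?_⟩
    rintro (_ | x) (_ | y) h
    · exact h.elim
    · exact h
    · exact h
    · exact h.symm
  loopless := by
    refine ⟨?_⟩
    rintro (_ | x) h
    · exact h.elim
    · exact G.irrefl h

/-- `X` is a critical-inducing set for the factor-component (with vertex set) `C1`:
a separating set containing `C1` such that `G[X]/C1` is factor-critical. -/
def CriticalInducing (G : SimpleGraph V) (C1 X : Set V) : Prop :=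
  Separating G X ∧ C1 ⊆ X ∧ FactorCritical (contractOn G X C1)

/-- `C1 ⊵ C2`: there is a critical-inducing set for `C1` to `C2`. -/
def Yield (G : SimpleGraph V) (C1 C2 : Set V) : Prop :=
  ∃ X : Set V, CriticalInducing G C1 X ∧ C2 ⊆ X

/-- `u ∼ v`: `u = v` or `G - u - v` has no perfect matching. -/
def SimRel (G : SimpleGraph V) (u v : V) : Prop :=
  u = v ∨ ¬ HasPMOn G (({u, v} : Set V)ᶜ)

/-- An `M`-ear relative to the vertex set `X`: a path whose two end vertices lie in `X`
and whose internal vertices do not (or a cycle with exactly one vertex in `X`), such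
that the ear minus `X` is an `M`-saturated path. -/
def IsMEar (G : SimpleGraph V) (M : Set (Sym2 V)) (X : Set V) {u v : V}
    (p : G.Walk u v) : Prop :=
  u ∈ X ∧ v ∈ X ∧ ((∃ h : u = v, (p.copy rfl h.symm).IsCycle) ∨ (u ≠ v ∧ p.IsPath)) ∧
  ∃ (x y : V) (hux : G.Adj u x) (q : G.Walk x y) (hyv : G.Adj y v),
    p = SimpleGraph.Walk.cons hux (q.concat hyv) ∧
    IsSaturatedPath M q ∧ ∀ w ∈ q.support, w ∉ X

/-- An `M`-ear relative to `X` through (the factor-component with vertex set) `C`: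
some internal vertex of the ear lies in `C`. -/
def IsMEarThrough (G : SimpleGraph V) (M : Set (Sym2 V)) (X C : Set V) {u v : V}
    (p : G.Walk u v) : Prop :=
  IsMEar G M X p ∧ ∃ w ∈ p.support, w ∉ X ∧ w ∈ C

/-- An `M`-ear sequence `(H 0, …, H k)` of pairwise distinct factor-components,
where for each `i` there is an `M`-ear relative to `H i` through `H (i+1)`. -/
def IsMEarSequence (G : SimpleGraph V) (M : Set (Sym2 V)) (k : ℕ)
    (H : Fin (k + 1) → Set V) : Prop :=
  (∀ i, IsFactorComponent G (H i)) ∧ Function.Injective H ∧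
  ∀ i : Fin k, ∃ (u v : V) (p : G.Walk u v),
    IsMEarThrough G M (H i.castSucc) (H i.succ) p

/-- A subgraph `H` of `G` is factor-critical: for every `v ∈ V(H)`, `H - v` has a
perfect matching. -/
def SubgraphFactorCritical (G : SimpleGraph V) (H : G.Subgraph) : Prop :=
  ∀ v ∈ H.verts, ∃ N : Set (Sym2 V), N ⊆ H.edgeSet ∧ DisjointEdges N ∧
    (∀ e ∈ N, v ∉ e) ∧ ∀ u ∈ H.verts, u ≠ v → ∃ e ∈ N, u ∈ e


section AuxMatching

variable {V : Type*}

open Classical in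
/-- Partner function of a set of edges: maps a covered vertex to the other endpoint
of (the chosen) edge containing it, and an uncovered vertex to itself. -/
noncomputable def mpart (M : Set (Sym2 V)) (v : V) : V :=
  if h : ∃ e ∈ M, v ∈ e then Sym2.Mem.other h.choose_spec.2 else v

lemma mpart_edge {M : Set (Sym2 V)} {v : V} (h : ∃ e ∈ M, v ∈ e) :
    s(v, mpart M v) ∈ M := by
  rw [mpart, dif_pos h, Sym2.other_spec]
  exact h.choose_spec.1

lemma mpart_uniq {M : Set (Sym2 V)} (hd : DisjointEdges M) {v : V} {e : Sym2 V}
    (he : e ∈ M) (hv : v ∈ e) : e = s(v, mpart M v) := by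
  have h : ∃ e ∈ M, v ∈ e := ⟨e, he, hv⟩
  by_contra hne
  exact hd e he _ (mpart_edge h) hne v hv (Sym2.mem_mk_left _ _)

lemma mpart_adj {G : SimpleGraph V} {M : Set (Sym2 V)} (hM : IsMatchingSet G M) {v : V}
    (h : ∃ e ∈ M, v ∈ e) : G.Adj v (mpart M v) := by
  have h2 := hM.1 (mpart_edge h)
  rwa [SimpleGraph.mem_edgeSet] at h2

lemma mpart_mpart {G : SimpleGraph V} {M : Set (Sym2 V)} (hM : IsMatchingSet G M) {v : V}
    (h : ∃ e ∈ M, v ∈ e) : mpart M (mpart M v) = v := by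
  have he : s(v, mpart M v) ∈ M := mpart_edge h
  have hvw : v ≠ mpart M v := (mpart_adj hM h).ne
  have hu := mpart_uniq hM.2 he (Sym2.mem_mk_right v (mpart M v))
  rw [Sym2.eq_iff] at hu
  rcases hu with ⟨h1, _⟩ | ⟨h1, _⟩
  · exact absurd h1 hvw
  · exact h1.symm

end AuxMatching

/-- Let `G` be a factor-critical finite simple graph and `G'` a nice
factor-critical subgraph of `G` (`G'` is factor-critical and `G − V(G')` has a perfect
matching). Then the contraction `G/G'` (identify all vertices of `G'` to a single vertex,
deleting loops and parallel edges) is factor-critical. -/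
theorem statement_2 {V : Type*} [Fintype V] (G : SimpleGraph V) (hG : FactorCritical G)
    (G' : G.Subgraph) (hfc : SubgraphFactorCritical G G')
    (hnice : HasPMOn G G'.vertsᶜ) :
    FactorCritical (contractOn G Set.univ G'.verts) := by
  classical
  obtain ⟨M₀, hM₀, hM₀X, hM₀cov⟩ := hnice
  -- properties of the partner function of M₀ (perfect matching of G - V(G'))
  have cov0 : ∀ a : V, a ∉ G'.verts → ∃ e ∈ M₀, a ∈ e := fun a ha => hM₀cov a ha
  have p0_edge : ∀ a : V, a ∉ G'.verts → s(a, mpart M₀ a) ∈ M₀ :=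
    fun a ha => mpart_edge (cov0 a ha)
  have p0_out : ∀ a : V, a ∉ G'.verts → mpart M₀ a ∉ G'.verts :=
    fun a ha => hM₀X _ (p0_edge a ha) _ (Sym2.mem_mk_right _ _)
  have p0_adj : ∀ a : V, a ∉ G'.verts → G.Adj a (mpart M₀ a) :=
    fun a ha => mpart_adj hM₀ (cov0 a ha)
  have p0_inv : ∀ a : V, a ∉ G'.verts → mpart M₀ (mpart M₀ a) = a :=
    fun a ha => mpart_mpart hM₀ (cov0 a ha)
  -- the embedding of outside vertices into the contraction
  set ι : V → Option ↥(Set.univ \ G'.verts) :=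
    fun a => if h : a ∉ G'.verts then some ⟨a, ⟨Set.mem_univ a, h⟩⟩ else none with hιdef
  have ιs : ∀ (a : V) (h : a ∉ G'.verts), ι a = some ⟨a, ⟨Set.mem_univ a, h⟩⟩ :=
    fun a h => dif_pos h
  have ι_ne_none : ∀ (a : V), a ∉ G'.verts → ι a ≠ none := by
    intro a h hc
    rw [ιs a h] at hc
    exact Option.some_ne_none _ hc
  have ιinj : ∀ a b : V, a ∉ G'.verts → ι a = ι b → a = b := by
    intro a b ha h
    by_cases hb : b ∉ G'.verts
    · rw [ιs a ha, ιs b hb] at h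
      exact congrArg Subtype.val (Option.some_injective _ h)
    · rw [ιs a ha] at h
      rw [hιdef] at h
      simp only [dif_neg hb] at h
      exact absurd h (Option.some_ne_none _)
  have adj_ss : ∀ a b : V, a ∉ G'.verts → b ∉ G'.verts → G.Adj a b →
      (contractOn G Set.univ G'.verts).Adj (ι a) (ι b) := by
    intro a b ha hb hab
    rw [ιs a ha, ιs b hb]
    exact hab
  have adj_sn : ∀ a : V, a ∉ G'.verts → ∀ s : V, s ∈ G'.verts → G.Adj a s →
      (contractOn G Set.univ G'.verts).Adj (ι a) none := by
    intro a ha s hs hab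
    rw [ιs a ha]
    exact ⟨s, hs, hab⟩
  intro v
  match v with
  | none =>
    -- use M₀ itself
    refine ⟨{e | ∃ a : V, a ∉ G'.verts ∧ e = s(ι a, ι (mpart M₀ a))}, ⟨?_, ?_⟩, ?_, ?_⟩
    · rintro e ⟨a, ha, rfl⟩
      exact (SimpleGraph.mem_edgeSet _).mpr (adj_ss _ _ ha (p0_out a ha) (p0_adj a ha))
    · rintro e ⟨a, ha, rfl⟩ f' ⟨b, hb, rfl⟩ hne y hy hy'
      apply hne
      rw [Sym2.mem_iff] at hy hy'
      have key : ∀ c d : V, c ∉ G'.verts → d ∉ G'.verts → c = d →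
          s(ι c, ι (mpart M₀ c)) = s(ι d, ι (mpart M₀ d)) := by
        rintro c d _ _ rfl; rfl
      rcases hy with rfl | rfl <;> rcases hy' with h | h
      · exact key a b ha hb (ιinj a b ha h)
      · have hab : a = mpart M₀ b := ιinj _ _ ha h
        rw [hab, p0_inv b hb]
        exact Sym2.eq_swap
      · have hab : mpart M₀ a = b := ιinj _ _ (p0_out a ha) h
        rw [← hab, p0_inv a ha]
        exact Sym2.eq_swap
      · have hab : mpart M₀ a = mpart M₀ b := ιinj _ _ (p0_out a ha) h
        have : a = b := by
          rw [← p0_inv a ha, hab, p0_inv b hb]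
        exact key a b ha hb this
    · rintro e ⟨a, ha, rfl⟩ y hy
      rw [Sym2.mem_iff] at hy
      rw [Set.mem_compl_singleton_iff]
      rcases hy with rfl | rfl
      · exact ι_ne_none a ha
      · exact ι_ne_none _ (p0_out a ha)
    · rintro (_ | ⟨a, ha⟩) hu
      · exact absurd rfl hu
      · refine ⟨s(ι a, ι (mpart M₀ a)), ⟨a, ha.2, rfl⟩, ?_⟩
        rw [ιs a ha.2]
        exact Sym2.mem_mk_left _ _
  | some x =>
    obtain ⟨M, hM, hMX, hMcov⟩ := hG x.1
    have covx : ∀ a : V, a ≠ x.1 → ∃ e ∈ M, a ∈ e :=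
      fun a ha => hMcov a (Set.mem_compl_singleton_iff.mpr ha)
    have px_edge : ∀ a : V, a ≠ x.1 → s(a, mpart M a) ∈ M :=
      fun a ha => mpart_edge (covx a ha)
    have px_ne : ∀ a : V, a ≠ x.1 → mpart M a ≠ x.1 :=
      fun a ha => Set.mem_compl_singleton_iff.mp (hMX _ (px_edge a ha) _ (Sym2.mem_mk_right _ _))
    have px_adj : ∀ a : V, a ≠ x.1 → G.Adj a (mpart M a) :=
      fun a ha => mpart_adj hM (covx a ha)
    have px_inv : ∀ a : V, a ≠ x.1 → mpart M (mpart M a) = a :=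
      fun a ha => mpart_mpart hM (covx a ha)
    have hx_out : x.1 ∉ G'.verts := x.2.2
    -- the alternating sequence starting at x
    let f : ℕ → V := fun n => Nat.rec (motive := fun _ => V) x.1
      (fun k ih => if k % 2 = 0 then mpart M₀ ih else mpart M ih) n
    have hf0 : f 0 = x.1 := rfl
    have hstep : ∀ k, f (k+1) = if k % 2 = 0 then mpart M₀ (f k) else mpart M (f k) :=
      fun _ => rfl
    have hfe : ∀ k, k % 2 = 0 → f (k+1) = mpart M₀ (f k) :=
      fun k hk => by rw [hstep k, if_pos hk]
    have hfo : ∀ k, k % 2 = 1 → f (k+1) = mpart M (f k) :=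
      fun k hk => by rw [hstep k, if_neg (by omega)]
    -- injectivity of the sequence while it stays outside G'
    have key : ∀ n : ℕ, (∀ j, j < n → f j ∉ G'.verts) →
        ∀ j, j < n → ∀ i, i < j → f i ≠ f j := by
      intro n hout j
      induction j using Nat.strong_induction_on with
      | _ j IH =>
      intro hjn i hij heq
      obtain ⟨k, rfl⟩ : ∃ k, j = k + 1 := ⟨j - 1, by omega⟩
      have hkn : k < n := by omega
      have houtk := hout k hkn
      rcases Nat.mod_two_eq_zero_or_one k with hk | hk
      · rw [hfe k hk] at heq
        rcases Nat.lt_or_ge i k with hik | hik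
        · have h2 : mpart M₀ (f i) = f k := by rw [heq]; exact p0_inv _ houtk
          rcases Nat.mod_two_eq_zero_or_one i with hi | hi
          · have h3 : f (i+1) = f k := by rw [hfe i hi]; exact h2
            exact IH k (by omega) hkn (i+1) (by omega) h3
          · obtain ⟨m, rfl⟩ : ∃ m, i = m + 1 := ⟨i - 1, by omega⟩
            have h4 : mpart M₀ (f (m+1)) = f m := by
              rw [hfe m (by omega)]
              exact p0_inv _ (hout m (by omega))
            exact IH k (by omega) hkn m (by omega) (h4 ▸ h2 ▸ rfl)
        · have hik' : i = k := by omega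
          subst hik'
          exact (p0_adj _ houtk).ne heq
      · have hkx : f k ≠ x.1 := by
          intro h
          exact IH k (by omega) hkn 0 (by omega) (by rw [hf0, h])
        rw [hfo k hk] at heq
        rcases Nat.lt_or_ge i k with hik | hik
        · rcases Nat.eq_zero_or_pos i with rfl | hi0
          · rw [hf0] at heq
            exact px_ne _ hkx heq.symm
          · have hix : f i ≠ x.1 := by
              intro h
              exact IH i (by omega) (by omega) 0 hi0 (by rw [hf0, h])
            have h2 : mpart M (f i) = f k := by rw [heq]; exact px_inv _ hkx
            rcases Nat.mod_two_eq_zero_or_one i with hi | hi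
            · obtain ⟨m, rfl⟩ : ∃ m, i = m + 1 := ⟨i - 1, by omega⟩
              have hmx : f m ≠ x.1 := by
                intro h
                exact IH m (by omega) (by omega) 0 (by omega) (by rw [hf0, h])
              have h4 : mpart M (f (m+1)) = f m := by
                rw [hfo m (by omega)]
                exact px_inv _ hmx
              exact IH k (by omega) hkn m (by omega) (h4 ▸ h2 ▸ rfl)
            · have h3 : f (i+1) = f k := by rw [hfo i hi]; exact h2
              exact IH k (by omega) hkn (i+1) (by omega) h3
        · have hik' : i = k := by omega
          subst hik'
          exact (px_adj _ hkx).ne heq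
    -- the sequence must reach G'
    have exist_t : ∃ t, 0 < t ∧ f (2*t) ∈ G'.verts := by
      by_contra hcon
      push_neg at hcon
      have hall : ∀ j, f j ∉ G'.verts := by
        intro j
        induction j using Nat.strong_induction_on with
        | _ j IH2 =>
        rcases Nat.eq_zero_or_pos j with rfl | hj
        · exact hx_out
        obtain ⟨k, rfl⟩ : ∃ k, j = k + 1 := ⟨j - 1, by omega⟩
        rcases Nat.mod_two_eq_zero_or_one k with hk | hk
        · rw [hfe k hk]
          exact p0_out _ (IH2 k (by omega))
        · intro hmem
          refine hcon ((k+1)/2) (by omega) ?_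
          rw [show 2*((k+1)/2) = k+1 by omega]
          exact hmem
      obtain ⟨i, j, hne, heq⟩ := Finite.exists_ne_map_eq_of_infinite f
      rcases hne.lt_or_gt with h | h
      · exact key (j+1) (fun m _ => hall m) j (by omega) i h heq
      · exact key (i+1) (fun m _ => hall m) i (by omega) j h heq.symm
    set t := Nat.find exist_t with htdef
    have ht := Nat.find_spec exist_t
    have htpos : 0 < t := ht.1
    have htin : f (2*t) ∈ G'.verts := ht.2
    have hbefore : ∀ s, s < t → f (2*s) ∉ G'.verts := by
      intro s hs hmem
      rcases Nat.eq_zero_or_pos s with rfl | hs0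
      · exact hx_out (by rw [show 2*0 = 0 by omega, hf0] at hmem; exact hmem)
      · exact Nat.find_min exist_t hs ⟨hs0, hmem⟩
    have houtE : ∀ j, j < 2*t → j % 2 = 0 → f j ∉ G'.verts := by
      intro j hj hj2
      have h := hbefore (j/2) (by omega)
      rwa [show 2*(j/2) = j by omega] at h
    have houtT : ∀ j, j < 2*t → f j ∉ G'.verts := by
      intro j hj
      rcases Nat.mod_two_eq_zero_or_one j with hj2 | hj2
      · exact houtE j hj hj2
      · obtain ⟨k, rfl⟩ : ∃ k, j = k + 1 := ⟨j - 1, by omega⟩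
        rw [hfe k (by omega)]
        exact p0_out _ (houtE k (by omega) (by omega))
    have hinj : ∀ A B, A < 2*t → B < 2*t → f A = f B → A = B := by
      intro A B hA hB hAB
      rcases Nat.lt_trichotomy A B with h | h | h
      · exact absurd hAB (key (2*t) houtT B hB A h)
      · exact h
      · exact absurd hAB.symm (key (2*t) houtT A hA B h)
    have hfnex : ∀ j, 0 < j → j < 2*t → f j ≠ x.1 := by
      intro j h0 hj heq
      exact key (2*t) houtT j hj 0 h0 (by rw [hf0, heq])
    have hlast : f (2*t) = mpart M (f (2*t-1)) := by
      have h1 : (2*t-1) + 1 = 2*t := by omega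
      calc f (2*t) = f ((2*t-1)+1) := by rw [h1]
        _ = mpart M (f (2*t-1)) := hfo _ (by omega)
    have hlx : f (2*t-1) ≠ x.1 := hfnex _ (by omega) (by omega)
    have hadj_last : G.Adj (f (2*t-1)) (f (2*t)) := by
      rw [hlast]; exact px_adj _ hlx
    -- on-path predicate
    set OnP : V → Prop := fun a => ∃ j, j < 2*t ∧ f j = a with hOnPdef
    have onp : ∀ j, j < 2*t → OnP (f j) := fun j hj => ⟨j, hj, rfl⟩
    have offp_p0 : ∀ a, a ∉ G'.verts → ¬ OnP a → ¬ OnP (mpart M₀ a) := by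
      rintro a ha hoff ⟨j, hj, hj2⟩
      have ha2 : a = mpart M₀ (f j) := by rw [hj2]; exact (p0_inv a ha).symm
      rcases Nat.mod_two_eq_zero_or_one j with h2 | h2
      · exact hoff ⟨j+1, by omega, by rw [hfe j h2, ← ha2]⟩
      · obtain ⟨k, rfl⟩ : ∃ k, j = k + 1 := ⟨j - 1, by omega⟩
        refine hoff ⟨k, by omega, ?_⟩
        rw [ha2, hfe k (by omega), p0_inv _ (houtT k (by omega))]
    have offp_ne_x : ∀ a, ¬ OnP a → a ≠ x.1 := by
      intro a hoff heq
      exact hoff ⟨0, by omega, by rw [hf0, heq]⟩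
    have hfinj : ∀ A B, A < 2*t → B < 2*t → ι (f A) = ι (f B) → A = B :=
      fun A B hA hB h => hinj A B hA hB (ιinj _ _ (houtT A hA) h)
    have hoffinj : ∀ a, a ∉ G'.verts → ¬ OnP a → ∀ B, B < 2*t → ι a ≠ ι (f B) :=
      fun a ha hoa B hB h => hoa ⟨B, hB, (ιinj _ _ ha h).symm⟩
    -- the matching of the contraction avoiding (some x)
    refine ⟨{e | (∃ a : V, a ∉ G'.verts ∧ ¬ OnP a ∧ e = s(ι a, ι (mpart M₀ a))) ∨
        (∃ i : ℕ, i + 1 < t ∧ e = s(ι (f (2*i+1)), ι (f (2*i+2)))) ∨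
        e = s(ι (f (2*t-1)), none)}, ⟨?_, ?_⟩, ?_, ?_⟩
    · -- edges of the contraction
      rintro e (⟨a, ha, _, rfl⟩ | ⟨i, hi, rfl⟩ | rfl)
      · exact (SimpleGraph.mem_edgeSet _).mpr (adj_ss _ _ ha (p0_out a ha) (p0_adj a ha))
      · refine (SimpleGraph.mem_edgeSet _).mpr
          (adj_ss _ _ (houtT (2*i+1) (by omega)) (houtT (2*i+2) (by omega)) ?_)
        rw [hfo (2*i+1) (by omega)]
        exact px_adj _ (hfnex (2*i+1) (by omega) (by omega))
      · exact (SimpleGraph.mem_edgeSet _).mpr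
          (adj_sn _ (houtT (2*t-1) (by omega)) (f (2*t)) htin hadj_last)
    · -- disjointness
      rintro e he f' hf' hne y hy hy'
      apply hne
      rcases he with ⟨a, ha, hoa, rfl⟩ | ⟨i, hi, rfl⟩ | rfl <;>
        rcases hf' with ⟨b, hb, hob, rfl⟩ | ⟨i', hi', rfl⟩ | rfl <;>
        rw [Sym2.mem_iff] at hy hy'
      · -- N1 N1
        have keyq : ∀ c d : V, c = d →
            s(ι c, ι (mpart M₀ c)) = s(ι d, ι (mpart M₀ d)) := by
          rintro c d rfl; rfl
        rcases hy with rfl | rfl <;> rcases hy' with h | h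
        · exact keyq a b (ιinj a b ha h)
        · have hab : a = mpart M₀ b := ιinj _ _ ha h
          rw [hab, p0_inv b hb]
          exact Sym2.eq_swap
        · have hab : mpart M₀ a = b := ιinj _ _ (p0_out a ha) h
          rw [← hab, p0_inv a ha]
          exact Sym2.eq_swap
        · have hab : mpart M₀ a = mpart M₀ b := ιinj _ _ (p0_out a ha) h
          exact keyq a b (by rw [← p0_inv a ha, hab, p0_inv b hb])
      · -- N1 N2 : impossible
        exfalso
        rcases hy with rfl | rfl <;> rcases hy' with h | h
        · exact hoffinj a ha hoa (2*i'+1) (by omega) h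
        · exact hoffinj a ha hoa (2*i'+2) (by omega) h
        · exact hoffinj _ (p0_out a ha) (offp_p0 a ha hoa) (2*i'+1) (by omega) h
        · exact hoffinj _ (p0_out a ha) (offp_p0 a ha hoa) (2*i'+2) (by omega) h
      · -- N1 N3 : impossible
        exfalso
        rcases hy with rfl | rfl <;> rcases hy' with h | h
        · exact hoffinj a ha hoa (2*t-1) (by omega) h
        · exact ι_ne_none a ha h
        · exact hoffinj _ (p0_out a ha) (offp_p0 a ha hoa) (2*t-1) (by omega) h
        · exact ι_ne_none _ (p0_out a ha) h
      · -- N2 N1 : impossible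
        exfalso
        rcases hy with rfl | rfl <;> rcases hy' with h | h
        · exact hoffinj b hb hob (2*i+1) (by omega) h.symm
        · exact hoffinj _ (p0_out b hb) (offp_p0 b hb hob) (2*i+1) (by omega) h.symm
        · exact hoffinj b hb hob (2*i+2) (by omega) h.symm
        · exact hoffinj _ (p0_out b hb) (offp_p0 b hb hob) (2*i+2) (by omega) h.symm
      · -- N2 N2
        rcases hy with rfl | rfl <;> rcases hy' with h | h
        · have := hfinj (2*i+1) (2*i'+1) (by omega) (by omega) h
          rw [show i = i' by omega]
        · have := hfinj (2*i+1) (2*i'+2) (by omega) (by omega) h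
          rw [show i = i' by omega]
        · have := hfinj (2*i+2) (2*i'+1) (by omega) (by omega) h
          rw [show i = i' by omega]
        · have := hfinj (2*i+2) (2*i'+2) (by omega) (by omega) h
          rw [show i = i' by omega]
      · -- N2 N3 : impossible
        exfalso
        rcases hy with rfl | rfl <;> rcases hy' with h | h
        · have := hfinj (2*i+1) (2*t-1) (by omega) (by omega) h
          omega
        · exact ι_ne_none _ (houtT (2*i+1) (by omega)) h
        · have := hfinj (2*i+2) (2*t-1) (by omega) (by omega) h
          omega
        · exact ι_ne_none _ (houtT (2*i+2) (by omega)) h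
      · -- N3 N1 : impossible
        exfalso
        rcases hy with rfl | rfl <;> rcases hy' with h | h
        · exact hoffinj b hb hob (2*t-1) (by omega) h.symm
        · exact hoffinj _ (p0_out b hb) (offp_p0 b hb hob) (2*t-1) (by omega) h.symm
        · exact ι_ne_none b hb h.symm
        · exact ι_ne_none _ (p0_out b hb) h.symm
      · -- N3 N2 : impossible
        exfalso
        rcases hy with rfl | rfl <;> rcases hy' with h | h
        · have := hfinj (2*t-1) (2*i'+1) (by omega) (by omega) h
          omega
        · have := hfinj (2*t-1) (2*i'+2) (by omega) (by omega) h
          omega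
        · exact ι_ne_none _ (houtT (2*i'+1) (by omega)) h.symm
        · exact ι_ne_none _ (houtT (2*i'+2) (by omega)) h.symm
    · -- all edges avoid (some x)
      have ι_ne_x : ∀ a : V, a ∉ G'.verts → a ≠ x.1 → ι a ≠ some x := by
        intro a ha hax hc
        rw [ιs a ha] at hc
        exact hax (congrArg Subtype.val (Option.some_injective _ hc))
      rintro e (⟨a, ha, hoa, rfl⟩ | ⟨i, hi, rfl⟩ | rfl) y hy <;>
        rw [Sym2.mem_iff] at hy <;> rw [Set.mem_compl_singleton_iff]
      · rcases hy with rfl | rfl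
        · exact ι_ne_x a ha (offp_ne_x a hoa)
        · exact ι_ne_x _ (p0_out a ha) (offp_ne_x _ (offp_p0 a ha hoa))
      · rcases hy with rfl | rfl
        · exact ι_ne_x _ (houtT (2*i+1) (by omega)) (hfnex (2*i+1) (by omega) (by omega))
        · exact ι_ne_x _ (houtT (2*i+2) (by omega)) (hfnex (2*i+2) (by omega) (by omega))
      · rcases hy with rfl | rfl
        · exact ι_ne_x _ (houtT (2*t-1) (by omega)) (hfnex (2*t-1) (by omega) (by omega))
        · exact (Option.some_ne_none _).symm
    · -- coverage
      rintro (_ | ⟨a, ha⟩) hu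
      · exact ⟨_, Or.inr (Or.inr rfl), Sym2.mem_mk_right _ _⟩
      · have hax : a ≠ x.1 := by
          intro h
          exact hu (by rw [Set.mem_singleton_iff]; exact congrArg some (Subtype.ext h))
        have hmem : some ⟨a, ha⟩ = ι a := (ιs a ha.2).symm
        by_cases hp : OnP a
        · obtain ⟨j, hj, rfl⟩ := hp
          have hj0 : 0 < j := by
            rcases Nat.eq_zero_or_pos j with rfl | h
            · exact absurd hf0 hax
            · exact h
          rcases Nat.mod_two_eq_zero_or_one j with hj2 | hj2
          · -- j even, j ≥ 2 : right endpoint of an N2 edge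
            obtain ⟨i, rfl⟩ : ∃ i, j = 2*i+2 := ⟨(j-2)/2, by omega⟩
            refine ⟨_, Or.inr (Or.inl ⟨i, by omega, rfl⟩), ?_⟩
            rw [hmem]
            exact Sym2.mem_mk_right _ _
          · rcases Nat.lt_or_ge j (2*t-1) with hjt | hjt
            · -- left endpoint of an N2 edge
              obtain ⟨i, rfl⟩ : ∃ i, j = 2*i+1 := ⟨(j-1)/2, by omega⟩
              refine ⟨_, Or.inr (Or.inl ⟨i, by omega, rfl⟩), ?_⟩
              rw [hmem]
              exact Sym2.mem_mk_left _ _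
            · -- j = 2t-1 : the N3 edge
              have hj' : j = 2*t-1 := by omega
              subst hj'
              refine ⟨_, Or.inr (Or.inr rfl), ?_⟩
              rw [hmem]
              exact Sym2.mem_mk_left _ _
        · refine ⟨_, Or.inl ⟨a, ha.2, hp, rfl⟩, ?_⟩
          rw [hmem]
          exact Sym2.mem_mk_left _ _
end

section
/- Let G be an elementary finite simple graph and M a perfect matching of G. Then for any two vertices u, v ∈ V(G), there is an M-saturated path between u and v, or there is an M-balanced path from u to v. -/
open SimpleGraph

variable {V : Type*}

namespace St7Aux



variable {V : Type*} {G : SimpleGraph V}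

/-- Phase-alternating predicate on walks: edges at `true` phase satisfy `Pt`,
edges at `false` phase satisfy `Pf`; phases alternate along the walk. -/
def AltPred (Pt Pf : Sym2 V → Prop) {G : SimpleGraph V} :
    Bool → ∀ {u v : V}, G.Walk u v → Prop
  | _, _, _, .nil => True
  | b, _, _, .cons (u := a) (v := c) _ p =>
      (if b then Pt s(a, c) else Pf s(a, c)) ∧ AltPred Pt Pf (!b) p

variable {Pt Pf : Sym2 V → Prop}

@[simp] lemma altPred_nil {b : Bool} {u : V} : AltPred Pt Pf b (.nil : G.Walk u u) := trivial

lemma altPred_cons {b : Bool} {u c w : V} (h : G.Adj u c) (p : G.Walk c w) :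
    AltPred Pt Pf b (.cons h p) ↔
      (if b then Pt s(u, c) else Pf s(u, c)) ∧ AltPred Pt Pf (!b) p := Iff.rfl

/-- The phase after traversing `n` edges starting from phase `b`. -/
def phaseAfter (b : Bool) (n : ℕ) : Bool := if Even n then b else !b

lemma phaseAfter_succ (b : Bool) (n : ℕ) : phaseAfter b (n + 1) = phaseAfter (!b) n := by
  rcases Nat.even_or_odd n with h | h
  · simp [phaseAfter, Nat.even_add_one, h]
  · simp [phaseAfter, Nat.even_add_one, Nat.not_even_iff_odd.2 h]

lemma phaseAfter_phaseAfter (b : Bool) (n : ℕ) :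
    phaseAfter (phaseAfter (!b) (n + 1)) n = b := by
  rcases Nat.even_or_odd n with h | h
  · simp [phaseAfter, Nat.even_add_one, h]
  · simp [phaseAfter, Nat.even_add_one, Nat.not_even_iff_odd.2 h]

lemma altPred_append {u v w : V} {b : Bool} (p : G.Walk u v) (q : G.Walk v w) :
    AltPred Pt Pf b (p.append q) ↔
      AltPred Pt Pf b p ∧ AltPred Pt Pf (phaseAfter b p.length) q := by
  induction p generalizing b with
  | nil => simp [phaseAfter, AltPred]
  | cons h p ih =>
      rw [Walk.cons_append, altPred_cons, altPred_cons, ih, Walk.length_cons,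
        phaseAfter_succ]
      tauto

lemma altPred_mono {Pt' Pf' : Sym2 V → Prop} (ht : ∀ e, Pt e → Pt' e) (hf : ∀ e, Pf e → Pf' e) :
    ∀ {b : Bool} {u v : V} {p : G.Walk u v}, AltPred Pt Pf b p → AltPred Pt' Pf' b p := by
  intro b u v p
  induction p generalizing b with
  | nil => intro; trivial
  | cons h p ih =>
      rintro ⟨h1, h2⟩
      refine ⟨?_, ih h2⟩
      cases b
      · exact hf _ h1
      · exact ht _ h1

lemma altPred_swap : ∀ {b : Bool} {u v : V} {p : G.Walk u v},
    AltPred Pt Pf b p → AltPred Pf Pt (!b) p := by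
  intro b u v p
  induction p generalizing b with
  | nil => intro; trivial
  | cons h p ih =>
      rintro ⟨h1, h2⟩
      refine ⟨?_, ih h2⟩
      cases b <;> simp_all

lemma altPred_reverse : ∀ {b : Bool} {u v : V} {p : G.Walk u v},
    AltPred Pt Pf b p → AltPred Pt Pf (phaseAfter (!b) p.length) p.reverse := by
  intro b u v p
  induction p generalizing b with
  | nil => intro; trivial
  | @cons a c w h p ih =>
      rintro ⟨h1, h2⟩
      rw [Walk.reverse_cons, altPred_append]
      have hlen : (Walk.cons h p).length = p.length + 1 := Walk.length_cons _ _
      constructor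
      · rw [hlen, phaseAfter_succ, Bool.not_not]
        have := ih h2
        rwa [Bool.not_not] at this
      · have hb : phaseAfter (phaseAfter (!b) (Walk.cons h p).length) p.reverse.length = b := by
          rw [hlen, Walk.length_reverse]; exact phaseAfter_phaseAfter b p.length
        rw [hb]
        refine ⟨?_, trivial⟩
        have : s(c, a) = s(a, c) := Sym2.eq_swap
        rw [this]
        exact h1



variable {M M' : Set (Sym2 V)}

/-- `M`-alternating walk with phase `b`: edges at phase `true` are in `M`,
edges at phase `false` are not. -/
abbrev AltW (M : Set (Sym2 V)) {G : SimpleGraph V} (b : Bool) {u v : V} (p : G.Walk u v) : Prop :=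
  AltPred (· ∈ M) (· ∉ M) b p

lemma mem_support_of_mem_edge {a c x : V} (p : G.Walk a c) {f : Sym2 V} (hf : f ∈ p.edges)
    (hx : x ∈ f) : x ∈ p.support := by
  obtain ⟨y, rfl⟩ := Sym2.mem_iff_exists.mp hx
  exact p.fst_mem_support_of_mem_edges hf

lemma match_unique {N : Set (Sym2 V)} (hD : DisjointEdges N) {e f : Sym2 V} (he : e ∈ N)
    (hf : f ∈ N) {x : V} (hxe : x ∈ e) (hxf : x ∈ f) : e = f := by
  by_contra hne
  exact hD e he f hf hne x hxe hxf

lemma matchPartner (hM : IsPerfectMatchingSet G M) (v : V) :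
    ∃ w, G.Adj v w ∧ s(v, w) ∈ M := by
  obtain ⟨e, heM, hve⟩ := hM.2 v
  obtain ⟨w, rfl⟩ := Sym2.mem_iff_exists.mp hve
  exact ⟨w, (G.mem_edgeSet).mp (hM.1.1 heM), heM⟩

lemma eq_of_length_zero {a c : V} (p : G.Walk a c) (h : p.length = 0) : a = c := by
  cases p with
  | nil => rfl
  | cons _ _ => simp [SimpleGraph.Walk.length_cons] at h

lemma exists_end_edge {a c : V} (p : G.Walk a c) (h : p.length ≠ 0) :
    ∃ e ∈ p.edges, c ∈ e := by
  induction p with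
  | nil => simp at h
  | @cons a d c hadj p ih =>
      by_cases hl : p.length = 0
      · obtain rfl := eq_of_length_zero p hl
        exact ⟨s(a, d), by simp, Sym2.mem_mk_right _ _⟩
      · obtain ⟨e, he, hce⟩ := ih hl
        exact ⟨e, by simp [he], hce⟩

lemma path_loop_eq_nil {v : V} {p : G.Walk v v} (hp : p.IsPath) : p = SimpleGraph.Walk.nil := by
  have := SimpleGraph.Path.loop_eq (⟨p, hp⟩ : G.Path v v)
  exact congrArg Subtype.val this

lemma altW_cover {b : Bool} {a c : V} {p : G.Walk a c} (ha : AltW M b p) :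
    ∀ x ∈ p.support, (b = false ∧ x = a) ∨ (x = c ∧ (Even p.length ↔ b = true)) ∨
      ∃ e ∈ p.edges, e ∈ M ∧ x ∈ e := by
  induction p generalizing b with
  | nil =>
      intro x hx
      simp only [SimpleGraph.Walk.support_nil, List.mem_singleton] at hx
      subst hx
      cases b
      · exact Or.inl ⟨rfl, rfl⟩
      · exact Or.inr (Or.inl ⟨rfl, by simp⟩)
  | @cons a d c h p ih =>
      obtain ⟨h1, h2⟩ := ha
      intro x hx
      rw [SimpleGraph.Walk.support_cons, List.mem_cons] at hx
      rcases hx with rfl | hx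
      · cases b
        · exact Or.inl ⟨rfl, rfl⟩
        · exact Or.inr (Or.inr ⟨s(x, d), by simp, by simpa using h1, Sym2.mem_mk_left _ _⟩)
      · rcases ih h2 x hx with ⟨hb, rfl⟩ | ⟨rfl, hpar⟩ | ⟨e, he, heM, hxe⟩
        · have hb' : b = true := by cases b <;> simp_all
          subst hb'
          exact Or.inr (Or.inr ⟨s(a, x), by simp, by simpa using h1, Sym2.mem_mk_right _ _⟩)
        · refine Or.inr (Or.inl ⟨rfl, ?_⟩)
          rw [SimpleGraph.Walk.length_cons, Nat.even_add_one]
          cases b <;> simp_all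
        · exact Or.inr (Or.inr ⟨e, by simp [he], heM, hxe⟩)

lemma altW_end_edge {b : Bool} {a c : V} {p : G.Walk a c} (hp : p.IsPath) (ha : AltW M b p)
    {f : Sym2 V} (hf : f ∈ p.edges) (hcf : c ∈ f) :
    f ∈ M ↔ (Odd p.length ↔ b = true) := by
  induction p generalizing b with
  | nil => simp at hf
  | @cons a d c h p ih =>
      obtain ⟨h1, h2⟩ := ha
      rw [SimpleGraph.Walk.cons_isPath_iff] at hp
      obtain ⟨hp', hna⟩ := hp
      rw [SimpleGraph.Walk.edges_cons, List.mem_cons] at hf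
      rcases hf with rfl | hf
      · rcases Sym2.mem_iff.mp hcf with rfl | rfl
        · exact absurd p.end_mem_support hna
        · have hnil : p = SimpleGraph.Walk.nil := path_loop_eq_nil hp'
          subst hnil
          cases b <;> simp_all
      · have hres := ih hp' h2 hf hcf
        rw [hres, SimpleGraph.Walk.length_cons, Nat.odd_add_one]
        cases b <;> simp [Nat.not_odd_iff_even]

lemma altW_malt {b : Bool} {a c : V} {p : G.Walk a c} (hp : p.IsPath) (ha : AltW M b p) :
    MAlternating M p := by
  induction p generalizing b with
  | nil => intro e he; simp at he
  | @cons a d c h p ih =>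
      obtain ⟨h1, h2⟩ := ha
      rw [SimpleGraph.Walk.cons_isPath_iff] at hp
      obtain ⟨hp', hna⟩ := hp
      have key : ∀ f ∈ p.edges, f ∉ M → s(a, d) ∉ M → ∀ x, x ∈ s(a, d) → x ∉ f := by
        intro f hf hfM hsM x hx hxf
        have hb : b = false := by
          cases b
          · rfl
          · exact absurd (by simpa using h1) hsM
        subst hb
        rcases Sym2.mem_iff.mp hx with rfl | rfl
        · exact hna (mem_support_of_mem_edge p hf hxf)
        · cases p with
          | nil => simp at hf
          | @cons d d' c h' p' =>
              obtain ⟨h3, _⟩ := h2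
              rw [SimpleGraph.Walk.edges_cons, List.mem_cons] at hf
              rw [SimpleGraph.Walk.cons_isPath_iff] at hp'
              rcases hf with rfl | hf
              · exact hfM (by simpa using h3)
              · exact hp'.2 (mem_support_of_mem_edge p' hf hxf)
      intro e he f hf heM hfM hne x hxe hxf
      rw [SimpleGraph.Walk.edges_cons, List.mem_cons] at he hf
      rcases he with rfl | he <;> rcases hf with rfl | hf
      · exact hne rfl
      · exact key f hf hfM heM x hxe hxf
      · exact key e he heM hfM x hxf hxe
      · exact ih hp' h2 e he f hf heM hfM hne x hxe hxf

lemma append_path_of {u z t : V} {Q1 : G.Walk u z} {R : G.Walk z t} (h1 : Q1.IsPath)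
    (h2 : R.IsPath) (hdis : ∀ w, w ∈ Q1.support → w ∈ R.support → w = z) :
    (Q1.append R).IsPath := by
  rw [SimpleGraph.Walk.isPath_def, SimpleGraph.Walk.support_append, List.nodup_append]
  have hRnd : R.support.Nodup := (SimpleGraph.Walk.isPath_def _).mp h2
  have hcons : R.support = z :: R.support.tail := R.support_eq_cons
  have hznt : z ∉ R.support.tail := by
    rw [hcons] at hRnd
    exact (List.nodup_cons.mp hRnd).1
  refine ⟨(SimpleGraph.Walk.isPath_def _).mp h1, ?_, ?_⟩
  · rw [hcons] at hRnd
    exact (List.nodup_cons.mp hRnd).2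
  · intro w hw1 w' hw2 hww
    rw [← hww] at hw2
    have hwR : w ∈ R.support := by rw [hcons]; exact List.mem_cons_of_mem _ hw2
    have := hdis w hw1 hwR
    subst this
    exact absurd hw2 hznt

lemma take_drop_eq [DecidableEq V] {s e z : V} {P : G.Walk s e} (hP : P.IsPath) (hz : z ∈ P.support) :
    ∀ w, w ∈ (P.takeUntil z hz).support → w ∈ (P.dropUntil z hz).support → w = z := by
  intro w h1 h2
  by_contra hne
  have hnd : ((P.takeUntil z hz).append (P.dropUntil z hz)).support.Nodup := by
    rw [P.take_spec hz]
    exact (SimpleGraph.Walk.isPath_def _).mp hP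
  rw [SimpleGraph.Walk.support_append, List.nodup_append] at hnd
  have h3 : w ∈ (P.dropUntil z hz).support.tail := by
    have hc := (P.dropUntil z hz).support_eq_cons
    rw [hc] at h2
    rcases List.mem_cons.mp h2 with rfl | h2
    · exact absurd rfl hne
    · exact h2
  exact hnd.2.2 w h1 w h3 rfl

lemma reachInto {T : Set V} {u x : V} (Q : G.Walk u x) (b : Bool) (hp : Q.IsPath)
    (ha : AltW M b Q) (hw : ∃ w ∈ Q.support, w ∈ T) :
    ∃ z : V, z ∈ T ∧ ∃ Q1 : G.Walk u z, Q1.IsPath ∧ AltW M b Q1 ∧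
      (∀ w ∈ Q1.support, w ∈ Q.support) ∧ (∀ w ∈ Q1.support, w ≠ z → w ∉ T) := by
  classical
  induction Q generalizing b with
  | nil =>
      obtain ⟨w, hw1, hw2⟩ := hw
      simp only [SimpleGraph.Walk.support_nil, List.mem_singleton] at hw1
      subst hw1
      exact ⟨w, hw2, SimpleGraph.Walk.nil, SimpleGraph.Walk.IsPath.nil, trivial, by simp,
        by simp⟩
  | @cons u d x h Q ih =>
      by_cases hu : u ∈ T
      · exact ⟨u, hu, SimpleGraph.Walk.nil, SimpleGraph.Walk.IsPath.nil, trivial, by simp,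
          by simp⟩
      · rw [SimpleGraph.Walk.cons_isPath_iff] at hp
        obtain ⟨h1, h2⟩ := ha
        have hw' : ∃ w ∈ Q.support, w ∈ T := by
          obtain ⟨w, hw1, hw2⟩ := hw
          rw [SimpleGraph.Walk.support_cons, List.mem_cons] at hw1
          rcases hw1 with rfl | hw1
          · exact absurd hw2 hu
          · exact ⟨w, hw1, hw2⟩
        obtain ⟨z, hz, Q1, hQ1p, hQ1a, hQ1s, hQ1T⟩ := ih (!b) hp.1 h2 hw'
        refine ⟨z, hz, SimpleGraph.Walk.cons h Q1, ?_, ⟨h1, hQ1a⟩, ?_, ?_⟩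
        · rw [SimpleGraph.Walk.cons_isPath_iff]
          exact ⟨hQ1p, fun hc => hp.2 (hQ1s u hc)⟩
        · intro w hw0
          rw [SimpleGraph.Walk.support_cons, List.mem_cons] at hw0 ⊢
          rcases hw0 with rfl | hw0
          · exact Or.inl rfl
          · exact Or.inr (hQ1s w hw0)
        · intro w hw0 hwz
          rw [SimpleGraph.Walk.support_cons, List.mem_cons] at hw0
          rcases hw0 with rfl | hw0
          · exact hu
          · exact hQ1T w hw0 hwz

lemma maxAltPath [Fintype V] (hM : IsPerfectMatchingSet G M)
    (hM' : IsPerfectMatchingSet G M') {x y : V} (hxy' : s(x, y) ∈ M') (hxy : s(x, y) ∉ M)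
    (hne : x ≠ y) : ∃ P : G.Walk y x, P.IsPath ∧ AltW M true P ∧ Odd P.length := by
  classical
  set S : Set ℕ := {n | ∃ (t : V) (p : G.Walk y t), p.IsPath ∧
    AltPred (fun e => e ∈ M ∧ e ∉ M') (fun e => e ∈ M' ∧ e ∉ M) true p ∧ p.length = n} with hS
  obtain ⟨y₁, hadj₁, he₁⟩ := matchPartner hM y
  have he₁' : s(y, y₁) ∉ M' := by
    intro hmem
    have heq := match_unique hM'.1.2 hmem hxy' (Sym2.mem_mk_left _ _) (Sym2.mem_mk_right _ _)
    rw [heq] at he₁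
    exact hxy he₁
  have h1S : 1 ∈ S := by
    refine ⟨y₁, SimpleGraph.Walk.cons hadj₁ SimpleGraph.Walk.nil, ?_, ⟨?_, trivial⟩, by simp⟩
    · rw [SimpleGraph.Walk.cons_isPath_iff]
      simpa using hadj₁.ne
    · simpa using ⟨he₁, he₁'⟩
  have hbdd : BddAbove S := by
    refine ⟨Fintype.card V, fun n hn => ?_⟩
    obtain ⟨t, p, hp, _, rfl⟩ := hn
    exact hp.length_lt.le
  have hmax : ∀ m ∈ S, m ≤ sSup S := fun m hm => le_csSup hbdd hm
  obtain ⟨t, p, hp, halt, hlen⟩ := Nat.sSup_mem ⟨1, h1S⟩ hbdd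
  have hlen1 : 1 ≤ p.length := by rw [hlen]; exact hmax 1 h1S
  have hMp : AltW M true p := altPred_mono (fun e h => h.1) (fun e h => h.2) halt
  have hM'p : AltW M' false p :=
    altPred_mono (fun e h => h.1) (fun e h => h.2) (altPred_swap halt)
  obtain ⟨el, hel, htel⟩ := exists_end_edge p (by omega)
  have hodd : Odd p.length := by
    by_contra hev
    rw [Nat.not_odd_iff_even] at hev
    have hno : ¬ Odd p.length := Nat.not_odd_iff_even.mpr hev
    have helM' : el ∈ M' := (altW_end_edge hp hM'p hel htel).mpr (by simp [hno])
    have helM : el ∉ M := fun hmem =>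
      hno (((altW_end_edge hp hMp hel htel).mp hmem).mpr rfl)
    obtain ⟨t₂, hadj₂, he₂⟩ := matchPartner hM t
    have hne₂ : s(t, t₂) ∉ M' := by
      intro hmem
      have heq := match_unique hM'.1.2 hmem helM' (Sym2.mem_mk_left _ _) htel
      rw [heq] at he₂
      exact helM he₂
    have ht₂ : t₂ ∉ p.support := by
      intro hsup
      rcases altW_cover hMp t₂ hsup with ⟨hb, _⟩ | ⟨heq, _⟩ | ⟨f, hf, hfM, ht₂f⟩
      · simp at hb
      · exact hadj₂.ne heq.symm
      · have hfe : f = s(t, t₂) :=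
          match_unique hM.1.2 hfM he₂ ht₂f (Sym2.mem_mk_right _ _)
        have htf : t ∈ f := by rw [hfe]; exact Sym2.mem_mk_left _ _
        exact hno (((altW_end_edge hp hMp hf htf).mp hfM).mpr rfl)
    have hnew : p.length + 1 ∈ S := by
      refine ⟨t₂, p.concat hadj₂, ?_, ?_, by simp⟩
      · rw [SimpleGraph.Walk.concat_eq_append]
        refine append_path_of hp ?_ ?_
        · rw [SimpleGraph.Walk.cons_isPath_iff]
          simpa using hadj₂.ne
        · intro w hw1 hw2
          simp at hw2
          rcases hw2 with rfl | rfl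
          · rfl
          · exact absurd hw1 ht₂
      · rw [SimpleGraph.Walk.concat_eq_append]
        refine (altPred_append _ _).mpr ⟨halt, ?_⟩
        rw [show phaseAfter true p.length = true from by simp [phaseAfter, hev]]
        exact ⟨by simpa using ⟨he₂, hne₂⟩, trivial⟩
    have := hmax _ hnew
    omega
  have helM : el ∈ M := (altW_end_edge hp hMp hel htel).mpr (by simp [hodd])
  have helM' : el ∉ M' := by
    intro hmem
    have := ((altW_end_edge hp hM'p hel htel).mp hmem).mp hodd
    simp at this
  have htx : t = x := by
    by_contra hne'
    obtain ⟨t₂, hadj₂, he₂⟩ := matchPartner hM' t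
    have hne₂ : s(t, t₂) ∉ M := by
      intro hmem
      have heq := match_unique hM.1.2 hmem helM (Sym2.mem_mk_left _ _) htel
      rw [heq] at he₂
      exact helM' he₂
    have ht₂ : t₂ ∉ p.support := by
      intro hsup
      rcases altW_cover hM'p t₂ hsup with ⟨_, heq⟩ | ⟨heq, _⟩ | ⟨f, hf, hfM', ht₂f⟩
      · subst heq
        have heq2 := match_unique hM'.1.2 he₂ hxy' (Sym2.mem_mk_right _ _)
          (Sym2.mem_mk_right _ _)
        rcases Sym2.eq_iff.mp heq2 with ⟨h5, _⟩ | ⟨_, h6⟩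
        · exact hne' h5
        · exact hne h6.symm
      · exact hadj₂.ne heq.symm
      · have hfe : f = s(t, t₂) :=
          match_unique hM'.1.2 hfM' he₂ ht₂f (Sym2.mem_mk_right _ _)
        have htf : t ∈ f := by rw [hfe]; exact Sym2.mem_mk_left _ _
        have := ((altW_end_edge hp hM'p hf htf).mp hfM').mp hodd
        simp at this
    have hnew : p.length + 1 ∈ S := by
      refine ⟨t₂, p.concat hadj₂, ?_, ?_, by simp⟩
      · rw [SimpleGraph.Walk.concat_eq_append]
        refine append_path_of hp ?_ ?_
        · rw [SimpleGraph.Walk.cons_isPath_iff]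
          simpa using hadj₂.ne
        · intro w hw1 hw2
          simp at hw2
          rcases hw2 with rfl | rfl
          · rfl
          · exact absurd hw1 ht₂
      · rw [SimpleGraph.Walk.concat_eq_append]
        refine (altPred_append _ _).mpr ⟨halt, ?_⟩
        rw [show phaseAfter true p.length = false from by
          simp [phaseAfter, Nat.not_even_iff_odd.mpr hodd]]
        exact ⟨by simpa using ⟨he₂, hne₂⟩, trivial⟩
    have := hmax _ hnew
    omega
  subst htx
  exact ⟨p, hp, hMp, hodd⟩

lemma step [Fintype V] (hM : IsPerfectMatchingSet G M) {u x y : V}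
    (hadj : G.Adj x y) (hall : Allowed G s(x, y))
    (hQ : ∃ Q : G.Walk u x, Q.IsPath ∧ AltW M true Q) :
    ∃ R : G.Walk u y, R.IsPath ∧ AltW M true R := by
  classical
  obtain ⟨Q, hQp, hQa⟩ := hQ
  by_cases hy : y ∈ Q.support
  · refine ⟨Q.takeUntil y hy, hQp.takeUntil hy, ?_⟩
    have h0 := hQa
    rw [← Q.take_spec hy] at h0
    exact ((altPred_append _ _).mp h0).1
  · by_cases hxyM : s(x, y) ∈ M
    · rcases Nat.even_or_odd Q.length with hev | hod
      · refine ⟨Q.concat hadj, ?_, ?_⟩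
        · rw [SimpleGraph.Walk.concat_eq_append]
          refine append_path_of hQp ?_ ?_
          · rw [SimpleGraph.Walk.cons_isPath_iff]
            simpa using hadj.ne
          · intro w hw1 hw2
            simp at hw2
            rcases hw2 with rfl | rfl
            · rfl
            · exact absurd hw1 hy
        · rw [SimpleGraph.Walk.concat_eq_append]
          refine (altPred_append _ _).mpr ⟨hQa, ?_⟩
          rw [show phaseAfter true Q.length = true from by simp [phaseAfter, hev]]
          exact ⟨by simpa using hxyM, trivial⟩
      · exfalso
        obtain ⟨el, hel, hxel⟩ := exists_end_edge Q (by intro h0; rw [h0] at hod; simp at hod)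
        have helM : el ∈ M := (altW_end_edge hQp hQa hel hxel).mpr (by simp [hod])
        have heq : el = s(x, y) := match_unique hM.1.2 helM hxyM hxel (Sym2.mem_mk_left _ _)
        apply hy
        have hyel : y ∈ el := by rw [heq]; exact Sym2.mem_mk_right _ _
        exact mem_support_of_mem_edge Q hel hyel
    · obtain ⟨M', hM', hxyM'⟩ := hall
      obtain ⟨P, hPp, hPa, hPodd⟩ := maxAltPath hM hM' hxyM' hxyM hadj.ne
      obtain ⟨z, hzP, Q1, hQ1p, hQ1a, hQ1s, hQ1T⟩ :=
        reachInto (T := {w | w ∈ P.support}) Q true hQp hQa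
          ⟨x, Q.end_mem_support, P.end_mem_support⟩
      rcases Nat.even_or_odd Q1.length with hev | hod
      · have hy1 : y ∉ Q1.support := fun hc => hy (hQ1s y hc)
        have hzy : z ≠ y := fun h => hy (h ▸ hQ1s z Q1.end_mem_support)
        have hsplit := P.take_spec hzP
        have hPa' := hPa
        rw [← hsplit] at hPa'
        obtain ⟨hTa, hDa⟩ := (altPred_append _ _).mp hPa'
        have hlenPD : (P.takeUntil z hzP).length + (P.dropUntil z hzP).length = P.length := by
          conv_rhs => rw [← hsplit]
          rw [SimpleGraph.Walk.length_append]
        rcases Nat.even_or_odd (P.takeUntil z hzP).length with hj | hj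
        · -- continue along `dropUntil` towards `x`, then cross the edge `xy`
          have hRa : AltW M true (P.dropUntil z hzP) := by
            rwa [show phaseAfter true (P.takeUntil z hzP).length = true from by
              simp [phaseAfter, hj]] at hDa
          have hylR : y ∉ (P.dropUntil z hzP).support := by
            intro hyR
            exact hzy ((take_drop_eq hPp hzP y
              (P.takeUntil z hzP).start_mem_support hyR)).symm
          have hF1p : (Q1.append (P.dropUntil z hzP)).IsPath := by
            refine append_path_of hQ1p (hPp.dropUntil hzP) ?_
            intro w hw1 hw2
            by_contra hne2
            exact hQ1T w hw1 hne2 (SimpleGraph.Walk.support_dropUntil_subset P hzP hw2)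
          have hyF1 : y ∉ (Q1.append (P.dropUntil z hzP)).support := by
            rw [SimpleGraph.Walk.mem_support_append_iff]
            rintro (hc | hc)
            · exact hy1 hc
            · exact hylR hc
          refine ⟨(Q1.append (P.dropUntil z hzP)).concat hadj, ?_, ?_⟩
          · rw [SimpleGraph.Walk.concat_eq_append]
            refine append_path_of hF1p ?_ ?_
            · rw [SimpleGraph.Walk.cons_isPath_iff]
              simpa using hadj.ne
            · intro w hw1 hw2
              simp at hw2
              rcases hw2 with rfl | rfl
              · rfl
              · exact absurd hw1 hyF1
          · rw [SimpleGraph.Walk.concat_eq_append]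
            have hRodd : Odd (P.dropUntil z hzP).length := by
              rcases hPodd with ⟨k, hk⟩
              rcases hj with ⟨m, hm⟩
              exact ⟨k - m, by omega⟩
            refine (altPred_append _ _).mpr ⟨(altPred_append _ _).mpr ⟨hQ1a, ?_⟩, ?_⟩
            · rwa [show phaseAfter true Q1.length = true from by simp [phaseAfter, hev]]
            · rw [SimpleGraph.Walk.length_append,
                show phaseAfter true (Q1.length + (P.dropUntil z hzP).length) = false from by
                  simp [phaseAfter, Nat.even_add, Nat.not_even_iff_odd.mpr hRodd, hev]]
              exact ⟨by simpa using hxyM, trivial⟩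
        · -- go back along `takeUntil` towards `y`
          have hRa : AltW M true (P.takeUntil z hzP).reverse := by
            have h5 := altPred_reverse hTa
            rwa [show phaseAfter (!true) (P.takeUntil z hzP).length = true from by
              simp [phaseAfter, Nat.not_even_iff_odd.mpr hj]] at h5
          refine ⟨Q1.append (P.takeUntil z hzP).reverse, ?_, ?_⟩
          · refine append_path_of hQ1p (hPp.takeUntil hzP).reverse ?_
            intro w hw1 hw2
            by_contra hne2
            refine hQ1T w hw1 hne2 (SimpleGraph.Walk.support_takeUntil_subset P hzP ?_)
            rwa [SimpleGraph.Walk.support_reverse, List.mem_reverse] at hw2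
          · refine (altPred_append _ _).mpr ⟨hQ1a, ?_⟩
            rwa [show phaseAfter true Q1.length = true from by simp [phaseAfter, hev]]
      · exfalso
        obtain ⟨el, hel, hzel⟩ := exists_end_edge Q1 (by intro h0; rw [h0] at hod; simp at hod)
        have helM : el ∈ M := (altW_end_edge hQ1p hQ1a hel hzel).mpr (by simp [hod])
        have hcov : ∃ f ∈ P.edges, f ∈ M ∧ z ∈ f := by
          rcases altW_cover hPa z hzP with ⟨hb, _⟩ | ⟨_, hpar⟩ | hf
          · simp at hb
          · exact absurd (hpar.mpr rfl) (Nat.not_even_iff_odd.mpr hPodd)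
          · exact hf
        obtain ⟨f, hfP, hfM, hzf⟩ := hcov
        have hef : el = f := match_unique hM.1.2 helM hfM hzel hzf
        obtain ⟨w', hw'⟩ := Sym2.mem_iff_exists.mp hzel
        have hw'el : w' ∈ el := by rw [hw']; exact Sym2.mem_mk_right _ _
        have hw'Q1 : w' ∈ Q1.support := mem_support_of_mem_edge Q1 hel hw'el
        have hw'P : w' ∈ P.support :=
          mem_support_of_mem_edge P (hef ▸ hfP) (hef ▸ hw'el)
        have hw'z : w' ≠ z := by
          have hhe : el ∈ G.edgeSet := Q1.edges_subset_edgeSet hel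
          rw [hw'] at hhe
          exact ((G.mem_edgeSet).mp hhe).ne.symm
        exact hQ1T w' hw'Q1 hw'z hw'P

lemma good_to_goal {u v : V} (p : G.Walk u v) (hp : p.IsPath) (ha : AltW M true p) :
    IsSaturatedPath M p ∨ IsBalancedPath M p := by
  rcases Nat.even_or_odd p.length with he | ho
  · right
    refine ⟨hp, he, altW_malt hp ha, ?_⟩
    cases p with
    | nil => simp
    | cons h q =>
        intro e he'
        obtain ⟨h1, _⟩ := ha
        simp only [SimpleGraph.Walk.edges_cons, List.head?_cons, Option.mem_def,
          Option.some.injEq] at he'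
        subst he'
        simpa using h1
  · left
    refine ⟨hp, ho, fun x hx => ?_⟩
    rcases altW_cover ha x hx with ⟨hb, _⟩ | ⟨_, hpar⟩ | ⟨e, hee, heM, hxe⟩
    · simp at hb
    · exact absurd (hpar.mpr rfl) (Nat.not_even_iff_odd.mpr ho)
    · exact ⟨e, hee, heM, hxe⟩

lemma main_aux [Fintype V] (hM : IsPerfectMatchingSet G M) {u v : V}
    (W : (allowedSubgraph G).Walk v u) : ∃ p : G.Walk u v, p.IsPath ∧ AltW M true p := by
  induction W with
  | nil => exact ⟨SimpleGraph.Walk.nil, SimpleGraph.Walk.IsPath.nil, trivial⟩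
  | @cons a c _ h W ih =>
      have h : G.Adj a c ∧ Allowed G s(a, c) := h
      refine step hM h.1.symm ?_ ih
      rw [show s(c, a) = s(a, c) from Sym2.eq_swap]
      exact h.2

end St7Aux

/-- Let `G` be an elementary finite simple graph and `M` a perfect
matching of `G`. Then for any two vertices `u, v` there is an `M`-saturated path between
`u` and `v`, or an `M`-balanced path from `u` to `v`. -/
theorem statement_7 {V : Type*} [Fintype V] (G : SimpleGraph V) (hG : Elementary G)
    (M : Set (Sym2 V)) (hM : IsPerfectMatchingSet G M) (u v : V) :
    (∃ p : G.Walk u v, IsSaturatedPath M p) ∨ (∃ p : G.Walk u v, IsBalancedPath M p) := by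
  classical
  obtain ⟨W⟩ := hG.2.preconnected v u
  obtain ⟨p, hp, ha⟩ := St7Aux.main_aux hM W
  rcases St7Aux.good_to_goal p hp ha with h | h
  · exact Or.inl ⟨p, h⟩
  · exact Or.inr ⟨p, h⟩
end
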